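/- Let (G,·) be a Moufang loop satisfying the dihedral condition (D) with data (S,β,γ,h), and define x*y = xy·h^{(-1)^r σ(i+j)} as in the dihedral construction. Then (G,*) is a Moufang loop, the associators of (G,·) and (G,*) coincide, A(G,·)=A(G,*) as loops, and N(G,·)=N(G,*) as sets. -/

import Mathlib

/-- A Moufang loop: a loop (with two-sided inverses satisfying the inverse
properties, which hold in any Moufang loop) satisfying the Moufang identity
((xy)x)z = x(y(xz)). -/
class MufLoop (Q : Type*) extends Mul Q, One Q, Inv Q where
  one_mul : ∀ x : Q, 1 * x = x
  mul_one : ∀ x : Q, x * 1 = x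
  inv_mul_cancel_left : ∀ x y : Q, x⁻¹ * (x * y) = y
  mul_inv_cancel_left : ∀ x y : Q, x * (x⁻¹ * y) = y
  mul_inv_cancel_right : ∀ x y : Q, (x * y) * y⁻¹ = x
  inv_mul_cancel_right : ∀ x y : Q, (x * y⁻¹) * y = x
  moufang : ∀ x y z : Q, ((x * y) * x) * z = x * (y * (x * z))

/-- σ(i)=1 if i>m, 0 if i ∈ M = {-m+1,...,m}, -1 if i<1-m. -/
def sgnM (m : ℕ) (i : ℤ) : ℤ :=
  if (m : ℤ) < i then 1 else if i < 1 - (m : ℤ) then -1 else 0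

/-- Natural powers in a Moufang loop. -/
def mnpow {Q : Type*} [MufLoop Q] (a : Q) : ℕ → Q
  | 0 => 1
  | n + 1 => mnpow a n * a

/-- Integer powers in a Moufang loop. -/
def mzpow {Q : Type*} [MufLoop Q] (a : Q) : ℤ → Q
  | Int.ofNat n => mnpow a n
  | Int.negSucc n => (mnpow a (n + 1))⁻¹

/-- A subset of a magma is a subloop if it contains the unit, is closed under
multiplication, and equations are solvable within it. -/
def IsSubloopM {G : Type*} (mul : G → G → G) (one : G) (A : Set G) : Prop :=
  one ∈ A ∧ (∀ a ∈ A, ∀ b ∈ A, mul a b ∈ A) ∧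
    (∀ a ∈ A, ∀ b ∈ A, ∃ c ∈ A, mul a c = b) ∧
    (∀ a ∈ A, ∀ b ∈ A, ∃ c ∈ A, mul c a = b)

/-- A subloop A is normal if xA = Ax, x(Ay) = (xA)y and x(yA) = (xy)A. -/
def IsNormalSubloopM {G : Type*} (mul : G → G → G) (one : G) (A : Set G) : Prop :=
  IsSubloopM mul one A ∧
  (∀ x : G, (fun a => mul x a) '' A = (fun a => mul a x) '' A) ∧
  (∀ x y : G, (fun b => mul x b) '' ((fun a => mul a y) '' A)
      = (fun b => mul b y) '' ((fun a => mul x a) '' A)) ∧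
  (∀ x y : G, (fun b => mul x b) '' ((fun a => mul y a) '' A)
      = (fun a => mul (mul x y) a) '' A)

/-- The subloop generated by a subset. -/
def genSubloopM {G : Type*} (mul : G → G → G) (one : G) (T : Set G) : Set G :=
  ⋂₀ {A : Set G | IsSubloopM mul one A ∧ T ⊆ A}

/-- The nucleus of a magma: elements associating with all pairs in all positions. -/
def nucSetM {G : Type*} (mul : G → G → G) : Set G :=
  {x | ∀ y z : G, mul x (mul y z) = mul (mul x y) z ∧
        mul y (mul x z) = mul (mul y x) z ∧
        mul y (mul z x) = mul (mul y z) x}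

/-- The cyclic construction on a Moufang loop: x * y · h^{σ(ind x + ind y)}. -/
def cmulM (m : ℕ) {G : Type*} [MufLoop G] (ind : G → ℤ) (h : G) (x y : G) : G :=
  x * y * mzpow h (sgnM m (ind x + ind y))

/-- The dihedral construction on a Moufang loop: x * y · h^{(-1)^r σ(i+j)},
where x lies in the coset β^{fr x} α^{ii x} of S, so that the "left index" of x
(i.e. x ∈ α^i ∪ eα^i) is i = ii x, the "right index" of y (i.e.
y ∈ α^j ∪ α^j f, using α^j γ = β α^{1-j}) is j = ii y if fr y = 0 and
j = 1 - ii y if fr y = 1, and r = fr y records whether y ∈ G₀ or G₁. -/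
def dmulM (m : ℕ) {G : Type*} [MufLoop G] (fr : G → ZMod 2) (ii : G → ℤ) (h : G)
    (x y : G) : G :=
  if fr y = 0 then x * y * mzpow h (sgnM m (ii x + ii y))
  else x * y * mzpow h (-sgnM m (ii x + (1 - ii y)))

section MufBase
variable {G : Type*} [MufLoop G]

lemma minv_mul (x : G) : x⁻¹ * x = 1 := by
  have := MufLoop.inv_mul_cancel_left x (1 : G); rwa [MufLoop.mul_one] at this

lemma mmul_inv (x : G) : x * x⁻¹ = 1 := by
  have := MufLoop.mul_inv_cancel_left x (1 : G); rwa [MufLoop.mul_one] at this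

lemma mleft_cancel {a x y : G} (hxy : a * x = a * y) : x = y := by
  have h1 : a⁻¹ * (a * x) = a⁻¹ * (a * y) := by rw [hxy]
  rwa [MufLoop.inv_mul_cancel_left, MufLoop.inv_mul_cancel_left] at h1

lemma mright_cancel {a x y : G} (hxy : x * a = y * a) : x = y := by
  have h1 : (x * a) * a⁻¹ = (y * a) * a⁻¹ := by rw [hxy]
  rwa [MufLoop.mul_inv_cancel_right, MufLoop.mul_inv_cancel_right] at h1

lemma mem_nuc_iff (x : G) : x ∈ nucSetM (· * · : G → G → G) ↔
    ∀ y z : G, x * (y * z) = (x * y) * z ∧ y * (x * z) = (y * x) * z ∧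
      y * (z * x) = (y * z) * x := Iff.rfl

lemma nuc_one : (1 : G) ∈ nucSetM (· * · : G → G → G) := by
  rw [mem_nuc_iff]; intro y z
  refine ⟨?_, ?_, ?_⟩ <;> simp only [MufLoop.one_mul, MufLoop.mul_one]

lemma nuc_mul {a b : G} (ha : a ∈ nucSetM (· * · : G → G → G))
    (hb : b ∈ nucSetM (· * · : G → G → G)) : a * b ∈ nucSetM (· * · : G → G → G) := by
  rw [mem_nuc_iff] at ha hb ⊢
  intro y z
  refine ⟨?_, ?_, ?_⟩
  · calc (a*b)*(y*z) = a*(b*(y*z)) := ((ha b (y*z)).1).symm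
      _ = a*((b*y)*z) := by rw [(hb y z).1]
      _ = (a*(b*y))*z := (ha (b*y) z).1
      _ = ((a*b)*y)*z := by rw [(ha b y).1]
  · calc y*((a*b)*z) = y*(a*(b*z)) := by rw [(ha b z).1]
      _ = (y*a)*(b*z) := (ha y (b*z)).2.1
      _ = ((y*a)*b)*z := (hb (y*a) z).2.1
      _ = (y*(a*b))*z := by rw [(ha y b).2.1]
  · calc y*(z*(a*b)) = y*((z*a)*b) := by rw [(hb z a).2.2]
      _ = (y*(z*a))*b := (hb y (z*a)).2.2
      _ = ((y*z)*a)*b := by rw [(ha y z).2.2]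
      _ = (y*z)*(a*b) := ((hb (y*z) a).2.2).symm

lemma nuc_inv {a : G} (ha : a ∈ nucSetM (· * · : G → G → G)) :
    a⁻¹ ∈ nucSetM (· * · : G → G → G) := by
  rw [mem_nuc_iff] at ha ⊢
  intro y z
  refine ⟨?_, ?_, ?_⟩
  · conv_lhs => rw [← MufLoop.mul_inv_cancel_left a y]
    rw [← (ha (a⁻¹ * y) z).1, MufLoop.inv_mul_cancel_left]
  · conv_lhs => rw [← MufLoop.mul_inv_cancel_left a z, MufLoop.inv_mul_cancel_left]
    conv_rhs => rw [← MufLoop.mul_inv_cancel_left a z]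
    rw [(ha (y * a⁻¹) (a⁻¹ * z)).2.1, MufLoop.inv_mul_cancel_right]
  · conv_rhs => rw [← MufLoop.inv_mul_cancel_right z a]
    rw [(ha y (z * a⁻¹)).2.2, MufLoop.mul_inv_cancel_right]

end MufBase

section NucHelp
variable {G : Type*} [MufLoop G]

lemma nucl1 {a : G} (ha : a ∈ nucSetM (· * · : G → G → G)) (y z : G) :
    a * (y * z) = (a * y) * z := (ha y z).1

lemma nucl2 {a : G} (ha : a ∈ nucSetM (· * · : G → G → G)) (y z : G) :
    y * (a * z) = (y * a) * z := (ha y z).2.1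

lemma nucl3 {a : G} (ha : a ∈ nucSetM (· * · : G → G → G)) (y z : G) :
    y * (z * a) = (y * z) * a := (ha y z).2.2

end NucHelp
section Pow
variable {G : Type*} [MufLoop G]
set_option linter.unusedSectionVars false

lemma mnpow_nuc {h : G} (hnuc : h ∈ nucSetM (· * · : G → G → G)) :
    ∀ n : ℕ, mnpow h n ∈ nucSetM (· * · : G → G → G)
  | 0 => nuc_one
  | n + 1 => nuc_mul (mnpow_nuc hnuc n) hnuc

lemma mzpow_nuc {h : G} (hnuc : h ∈ nucSetM (· * · : G → G → G)) :
    ∀ k : ℤ, mzpow h k ∈ nucSetM (· * · : G → G → G)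
  | Int.ofNat n => mnpow_nuc hnuc n
  | Int.negSucc n => nuc_inv (mnpow_nuc hnuc (n+1))

lemma mnpow_succ' {h : G} (hnuc : h ∈ nucSetM (· * · : G → G → G)) :
    ∀ n : ℕ, mnpow h (n + 1) = h * mnpow h n
  | 0 => by show mnpow h 0 * h = _; rw [mnpow, MufLoop.one_mul, MufLoop.mul_one]
  | n + 1 => by
      show mnpow h (n+1) * h = h * (mnpow h n * h)
      rw [mnpow_succ' hnuc n, nucl1 hnuc (mnpow h n) h]

lemma mzpow_zero' {h : G} : mzpow h (0 : ℤ) = 1 := rfl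

lemma mzpow_one' {h : G} : mzpow h (1 : ℤ) = h := by
  show mnpow h 1 = h
  rw [mnpow, mnpow, MufLoop.one_mul]

lemma mzpow_add_one {h : G} (hnuc : h ∈ nucSetM (· * · : G → G → G)) :
    ∀ a : ℤ, mzpow h (a + 1) = mzpow h a * h
  | Int.ofNat n => by
      show mzpow h (Int.ofNat (n+1)) = _
      rfl
  | Int.negSucc 0 => by
      show mzpow h 0 = mzpow h (Int.negSucc 0) * h
      show (1 : G) = (mnpow h 1)⁻¹ * h
      rw [mnpow, mnpow, MufLoop.one_mul, minv_mul]
  | Int.negSucc (n+1) => by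
      show mzpow h (Int.negSucc n) = mzpow h (Int.negSucc (n+1)) * h
      show (mnpow h (n+1))⁻¹ = (mnpow h (n+2))⁻¹ * h
      apply mright_cancel (a := mnpow h (n+1))
      rw [minv_mul, ← nucl2 hnuc (mnpow h (n+2))⁻¹ (mnpow h (n+1)),
        ← mnpow_succ' hnuc (n+1), minv_mul]

lemma mzpow_sub_one {h : G} (hnuc : h ∈ nucSetM (· * · : G → G → G)) (a : ℤ) :
    mzpow h (a - 1) = mzpow h a * h⁻¹ := by
  have h1 : mzpow h a = mzpow h (a - 1) * h := by
    rw [← mzpow_add_one hnuc (a-1), sub_add_cancel]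
  rw [h1, MufLoop.mul_inv_cancel_right]

lemma mzpow_add {h : G} (hnuc : h ∈ nucSetM (· * · : G → G → G)) (a : ℤ) :
    ∀ b : ℤ, mzpow h a * mzpow h b = mzpow h (a + b) := by
  intro b
  induction b using Int.induction_on with
  | zero => rw [mzpow_zero', MufLoop.mul_one, add_zero]
  | succ k ih =>
      rw [mzpow_add_one hnuc k, nucl3 hnuc (mzpow h a) (mzpow h k), ih,
        ← mzpow_add_one hnuc (a + k), add_assoc]
  | pred k ih =>
      have h1 : mzpow h (-(k:ℤ) - 1) = mzpow h (-(k:ℤ)) * h⁻¹ := mzpow_sub_one hnuc (-k)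
      rw [show a + (-(k:ℤ) - 1) = a + -(k:ℤ) - 1 by ring, h1,
        nucl3 (nuc_inv hnuc) (mzpow h a) (mzpow h (-(k:ℤ))), ih, mzpow_sub_one hnuc]

lemma mzpow_comm0 {h y : G} (hnuc : h ∈ nucSetM (· * · : G → G → G))
    (hc : h * y = y * h) : ∀ k : ℤ, mzpow h k * y = y * mzpow h k := by
  have hcinv : h⁻¹ * y = y * h⁻¹ := by
    have h2 : (h⁻¹ * y) * h = y := by
      rw [← nucl3 hnuc h⁻¹ y, ← hc, MufLoop.inv_mul_cancel_left]
    calc h⁻¹ * y = ((h⁻¹ * y) * h) * h⁻¹ := by rw [MufLoop.mul_inv_cancel_right]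
      _ = y * h⁻¹ := by rw [h2]
  have hi := nuc_inv hnuc
  intro k
  induction k using Int.induction_on with
  | zero => rw [mzpow_zero', MufLoop.one_mul, MufLoop.mul_one]
  | succ k ih =>
      calc mzpow h (k+1) * y = (mzpow h k * h) * y := by rw [mzpow_add_one hnuc k]
        _ = mzpow h k * (h * y) := (nucl2 hnuc (mzpow h k) y).symm
        _ = mzpow h k * (y * h) := by rw [hc]
        _ = (mzpow h k * y) * h := nucl3 hnuc (mzpow h k) y
        _ = (y * mzpow h k) * h := by rw [ih]
        _ = y * (mzpow h k * h) := (nucl3 hnuc y (mzpow h k)).symm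
        _ = y * mzpow h (k+1) := by rw [← mzpow_add_one hnuc k]
  | pred k ih =>
      calc mzpow h (-(k:ℤ)-1) * y = (mzpow h (-(k:ℤ)) * h⁻¹) * y := by
            rw [mzpow_sub_one hnuc]
        _ = mzpow h (-(k:ℤ)) * (h⁻¹ * y) := (nucl2 hi (mzpow h (-(k:ℤ))) y).symm
        _ = mzpow h (-(k:ℤ)) * (y * h⁻¹) := by rw [hcinv]
        _ = (mzpow h (-(k:ℤ)) * y) * h⁻¹ := nucl3 hi (mzpow h (-(k:ℤ))) y
        _ = (y * mzpow h (-(k:ℤ))) * h⁻¹ := by rw [ih]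
        _ = y * (mzpow h (-(k:ℤ)) * h⁻¹) := (nucl3 hi y (mzpow h (-(k:ℤ)))).symm
        _ = y * mzpow h (-(k:ℤ)-1) := by rw [← mzpow_sub_one hnuc]

lemma mzpow_comm1 {h y : G} (hnuc : h ∈ nucSetM (· * · : G → G → G))
    (hg : (h * y) * h = y) : ∀ k : ℤ, mzpow h k * y = y * mzpow h (-k) := by
  have hy1 : h * y = y * h⁻¹ := by
    calc h * y = ((h * y) * h) * h⁻¹ := by rw [MufLoop.mul_inv_cancel_right]
      _ = y * h⁻¹ := by rw [hg]
  have hy2 : h⁻¹ * y = y * h := by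
    have h2 : h * (y * h) = y := by rw [nucl1 hnuc y h, hg]
    calc h⁻¹ * y = h⁻¹ * (h * (y * h)) := by rw [h2]
      _ = y * h := by rw [MufLoop.inv_mul_cancel_left]
  have hi := nuc_inv hnuc
  intro k
  induction k using Int.induction_on with
  | zero => rw [mzpow_zero', MufLoop.one_mul, neg_zero, mzpow_zero', MufLoop.mul_one]
  | succ k ih =>
      have hkey : mzpow h ((k:ℤ)+1) * y = y * mzpow h (-(k:ℤ)-1) := by
        calc mzpow h ((k:ℤ)+1) * y = (mzpow h (k:ℤ) * h) * y := by rw [mzpow_add_one hnuc k]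
          _ = mzpow h (k:ℤ) * (h * y) := (nucl2 hnuc (mzpow h (k:ℤ)) y).symm
          _ = mzpow h (k:ℤ) * (y * h⁻¹) := by rw [hy1]
          _ = (mzpow h (k:ℤ) * y) * h⁻¹ := nucl3 hi (mzpow h (k:ℤ)) y
          _ = (y * mzpow h (-(k:ℤ))) * h⁻¹ := by rw [ih]
          _ = y * (mzpow h (-(k:ℤ)) * h⁻¹) := (nucl3 hi y (mzpow h (-(k:ℤ)))).symm
          _ = y * mzpow h (-(k:ℤ)-1) := by rw [← mzpow_sub_one hnuc]
      rwa [show -((k:ℤ)+1) = -(k:ℤ)-1 by ring]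
  | pred k ih =>
      have hkey : mzpow h (-(k:ℤ)-1) * y = y * mzpow h ((k:ℤ)+1) := by
        calc mzpow h (-(k:ℤ)-1) * y = (mzpow h (-(k:ℤ)) * h⁻¹) * y := by
              rw [mzpow_sub_one hnuc]
          _ = mzpow h (-(k:ℤ)) * (h⁻¹ * y) := (nucl2 hi (mzpow h (-(k:ℤ))) y).symm
          _ = mzpow h (-(k:ℤ)) * (y * h) := by rw [hy2]
          _ = (mzpow h (-(k:ℤ)) * y) * h := nucl3 hnuc (mzpow h (-(k:ℤ))) y
          _ = (y * mzpow h (k:ℤ)) * h := by rw [ih, neg_neg]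
          _ = y * (mzpow h (k:ℤ) * h) := (nucl3 hnuc y (mzpow h (k:ℤ))).symm
          _ = y * mzpow h ((k:ℤ)+1) := by rw [← mzpow_add_one hnuc k]
      rwa [show -(-(k:ℤ)-1) = (k:ℤ)+1 by ring]

end Pow
/-- sign of a coset: +1 on G₀, -1 on G₁. -/
def epsZ (r : ZMod 2) : ℤ := if r = 0 then 1 else -1

lemma epsZ_zero : epsZ 0 = 1 := rfl

lemma epsZ_cases (r : ZMod 2) : epsZ r = 1 ∨ epsZ r = -1 := by
  unfold epsZ; split <;> simp

lemma epsZ_add (r s : ZMod 2) : epsZ (r + s) = epsZ r * epsZ s := by revert r s; decide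

lemma sgn_zero_of {m : ℕ} {t : ℤ} (h1 : 1 - (m:ℤ) ≤ t) (h2 : t ≤ (m:ℤ)) :
    sgnM m t = 0 := by
  unfold sgnM; rw [if_neg (by omega), if_neg (by omega)]

lemma sgn_one_sub (m : ℕ) (t : ℤ) : sgnM m (1 - t) = - sgnM m t := by
  unfold sgnM; split_ifs <;> omega

lemma red_mem {m : ℕ} (hm : 0 < m) {t : ℤ} (h1 : 1 - 2*(m:ℤ) ≤ t) (h2 : t ≤ 2*(m:ℤ)) :
    t - 2*(m:ℤ) * sgnM m t ∈ Set.Icc (1 - (m:ℤ)) (m:ℤ) := by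
  have hm' : (1:ℤ) ≤ (m:ℤ) := by exact_mod_cast hm
  rw [Set.mem_Icc]; unfold sgnM; split_ifs <;> constructor <;> omega

lemma castInjM {m : ℕ} (hm : 0 < m) {a b : ℤ}
    (ha : a ∈ Set.Icc (1 - (m:ℤ)) (m:ℤ)) (hb : b ∈ Set.Icc (1 - (m:ℤ)) (m:ℤ))
    (hab : ((a : ZMod (2*m)) = (b : ZMod (2*m)))) : a = b := by
  have hm' : (1:ℤ) ≤ (m:ℤ) := by exact_mod_cast hm
  rw [Set.mem_Icc] at ha hb
  have hd : ((2*m : ℕ) : ℤ) ∣ a - b := by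
    rw [← ZMod.intCast_zmod_eq_zero_iff_dvd, Int.cast_sub, sub_eq_zero]
    exact hab
  obtain ⟨d, hd⟩ := hd
  push_cast at hd
  rcases lt_trichotomy d 0 with hlt | h0 | hgt
  · have : 2*(m:ℤ)*d ≤ 2*(m:ℤ)*(-1) := by
      apply mul_le_mul_of_nonneg_left (by omega) (by positivity)
    nlinarith
  · rw [h0, mul_zero] at hd; omega
  · have : 2*(m:ℤ)*1 ≤ 2*(m:ℤ)*d := by
      apply mul_le_mul_of_nonneg_left (by omega) (by positivity)
    nlinarith

lemma small_mult {m : ℕ} (hm : 0 < m) {v X : ℤ} (h1 : 1 - (m:ℤ) ≤ v) (h2 : v ≤ (m:ℤ))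
    (he : v = 2*(m:ℤ)*X) : v = 0 ∧ X = 0 := by
  have hm' : (1:ℤ) ≤ (m:ℤ) := by exact_mod_cast hm
  rcases lt_trichotomy X 0 with hlt | h0 | hgt
  · have : 2*(m:ℤ)*X ≤ 2*(m:ℤ)*(-1) := by
      apply mul_le_mul_of_nonneg_left (by omega) (by positivity)
    nlinarith
  · rw [h0, mul_zero] at he; constructor <;> omega
  · have : 2*(m:ℤ)*1 ≤ 2*(m:ℤ)*X := by
      apply mul_le_mul_of_nonneg_left (by omega) (by positivity)
    nlinarith

lemma two_m_ne {m : ℕ} (hm : 0 < m) : (2*(m:ℤ)) ≠ 0 := by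
  have h1 : (0:ℤ) < (m:ℤ) := by exact_mod_cast hm
  omega
/-- Bundled data for the dihedral construction. -/
structure DC (m : ℕ) (G : Type*) [MufLoop G] where
  fi : G → ZMod (2*m)
  fr : G → ZMod 2
  ii : G → ℤ
  h : G
  hm : 0 < m
  hfr : ∀ x y : G, fr (x*y) = fr x + fr y
  hfi : ∀ x y : G, fi (x*y) = (if fr y = 0 then fi x else -fi x) + fi y
  hsurj : ∀ p : ZMod (2*m) × ZMod 2, ∃ x : G, fi x = p.1 ∧ fr x = p.2
  hiiM : ∀ x : G, ii x ∈ Set.Icc (1-(m:ℤ)) (m:ℤ)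
  hii : ∀ x : G, ((ii x : ZMod (2*m))) = fi x
  hfrh : fr h = 0
  hfih : fi h = 0
  hhN : h ∈ nucSetM (· * · : G → G → G)
  hhZ0 : ∀ y : G, fr y = 0 → h * y = y * h
  hhG1 : ∀ x : G, fr x ≠ 0 → (h * x) * h = x

namespace DC
variable {m : ℕ} {G : Type*} [MufLoop G] (c : DC m G)

/-- The exponent in the dihedral construction. -/
def de (x y : G) : ℤ := sgnM m (epsZ (c.fr y) * c.ii x + c.ii y)

lemma fr_one : c.fr 1 = 0 := by
  have h1 := c.hfr 1 1; rw [MufLoop.mul_one] at h1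
  exact left_eq_add.mp h1

lemma fi_one : c.fi 1 = 0 := by
  have h1 := c.hfi 1 1
  rw [MufLoop.mul_one, if_pos c.fr_one] at h1
  exact left_eq_add.mp h1

lemma ii_congr {a b : G} (hab : c.fi a = c.fi b) : c.ii a = c.ii b :=
  castInjM c.hm (c.hiiM a) (c.hiiM b) (by rw [c.hii, c.hii, hab])

lemma ii_zero {a : G} (hab : c.fi a = 0) : c.ii a = 0 := by
  apply castInjM c.hm (c.hiiM a)
  · rw [Set.mem_Icc]
    have : (1:ℤ) ≤ (m:ℤ) := by exact_mod_cast c.hm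
    omega
  · rw [c.hii, hab]; norm_num

lemma fi_of_ii_zero {a : G} (hab : c.ii a = 0) : c.fi a = 0 := by
  rw [← c.hii, hab]; norm_num

lemma ii_one : c.ii 1 = 0 := c.ii_zero c.fi_one

lemma frfi_inv {x : G} (h1 : c.fr x = 0) (h2 : c.fi x = 0) :
    c.fr x⁻¹ = 0 ∧ c.fi x⁻¹ = 0 := by
  have hf := c.hfr x x⁻¹
  rw [mmul_inv, c.fr_one, h1, zero_add] at hf
  refine ⟨hf.symm, ?_⟩
  have hg := c.hfi x x⁻¹
  rw [mmul_inv, c.fi_one, if_pos hf.symm, h2, zero_add] at hg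
  exact hg.symm

lemma frfi_npow : ∀ n : ℕ, c.fr (mnpow c.h n) = 0 ∧ c.fi (mnpow c.h n) = 0
  | 0 => ⟨c.fr_one, c.fi_one⟩
  | n + 1 => by
      have ih := frfi_npow n
      constructor
      · show c.fr (mnpow c.h n * c.h) = 0
        rw [c.hfr, ih.1, c.hfrh, add_zero]
      · show c.fi (mnpow c.h n * c.h) = 0
        rw [c.hfi, if_pos c.hfrh, ih.2, c.hfih, add_zero]

lemma frH : ∀ k : ℤ, c.fr (mzpow c.h k) = 0
  | Int.ofNat n => (c.frfi_npow n).1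
  | Int.negSucc n => (c.frfi_inv (c.frfi_npow (n+1)).1 (c.frfi_npow (n+1)).2).1

lemma fiH : ∀ k : ℤ, c.fi (mzpow c.h k) = 0
  | Int.ofNat n => (c.frfi_npow n).2
  | Int.negSucc n => (c.frfi_inv (c.frfi_npow (n+1)).1 (c.frfi_npow (n+1)).2).2

lemma fr_mulH (x : G) (k : ℤ) : c.fr (x * mzpow c.h k) = c.fr x := by
  rw [c.hfr, c.frH, add_zero]

lemma fi_mulH (x : G) (k : ℤ) : c.fi (x * mzpow c.h k) = c.fi x := by
  rw [c.hfi, if_pos (c.frH k), c.fiH, add_zero]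

lemma ii_mulH (x : G) (k : ℤ) : c.ii (x * mzpow c.h k) = c.ii x :=
  c.ii_congr (c.fi_mulH x k)

lemma de_mulH_left (x y : G) (a : ℤ) : c.de (x * mzpow c.h a) y = c.de x y := by
  unfold de; rw [c.ii_mulH]

lemma de_mulH_right (x y : G) (a : ℤ) : c.de x (y * mzpow c.h a) = c.de x y := by
  unfold de; rw [c.ii_mulH, c.fr_mulH]

lemma ii_mul (x y : G) :
    c.ii (x * y) = epsZ (c.fr y) * c.ii x + c.ii y - 2*(m:ℤ) * c.de x y := by
  have hx := c.hiiM x; have hy := c.hiiM y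
  rw [Set.mem_Icc] at hx hy
  apply castInjM c.hm (c.hiiM (x*y))
  · unfold de
    rcases epsZ_cases (c.fr y) with he | he <;> rw [he] <;>
      exact red_mem c.hm (by omega) (by omega)
  · rw [c.hii, c.hfi]
    push_cast
    rw [c.hii, c.hii]
    have hz : (2:ZMod (2*m)) * ((m:ℕ) : ZMod (2*m)) = 0 := by
      have h0 := ZMod.natCast_self (2*m)
      push_cast at h0
      exact h0
    rw [hz, zero_mul, sub_zero]
    by_cases hfy : c.fr y = 0
    · rw [if_pos hfy, hfy, epsZ_zero]; push_cast; rw [one_mul]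
    · rw [if_neg hfy, show epsZ (c.fr y) = -1 from by unfold epsZ; rw [if_neg hfy]]
      push_cast; rw [neg_one_mul]

lemma dmul_eq (x y : G) :
    dmulM m c.fr c.ii c.h x y = (x * y) * mzpow c.h (c.de x y) := by
  unfold dmulM de
  by_cases hfy : c.fr y = 0
  · rw [if_pos hfy, hfy, epsZ_zero, one_mul]
  · rw [if_neg hfy, show epsZ (c.fr y) = -1 from by unfold epsZ; rw [if_neg hfy],
      show (-1) * c.ii x + c.ii y = 1 - (c.ii x + (1 - c.ii y)) by ring, sgn_one_sub]

lemma Hcomm (y : G) (k : ℤ) :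
    mzpow c.h k * y = y * mzpow c.h (epsZ (c.fr y) * k) := by
  by_cases hfy : c.fr y = 0
  · rw [hfy, epsZ_zero, one_mul]
    exact mzpow_comm0 c.hhN (c.hhZ0 y hfy) k
  · rw [show epsZ (c.fr y) = -1 from by unfold epsZ; rw [if_neg hfy], neg_one_mul]
    exact mzpow_comm1 c.hhN (c.hhG1 y hfy) k

lemma dmul_right_H (u v : G) (a : ℤ) :
    dmulM m c.fr c.ii c.h u (v * mzpow c.h a)
      = (u * v) * mzpow c.h (a + c.de u v) := by
  rw [c.dmul_eq, c.de_mulH_right, nucl3 (mzpow_nuc c.hhN a) u v,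
    ← nucl3 (mzpow_nuc c.hhN (c.de u v)) (u*v) (mzpow c.h a),
    mzpow_add c.hhN a (c.de u v)]

lemma dmul_left_H (u v : G) (a : ℤ) :
    dmulM m c.fr c.ii c.h (u * mzpow c.h a) v
      = (u * v) * mzpow c.h (epsZ (c.fr v) * a + c.de u v) := by
  rw [c.dmul_eq, c.de_mulH_left,
    ← nucl2 (mzpow_nuc c.hhN a) u v, c.Hcomm v a,
    nucl3 (mzpow_nuc c.hhN (epsZ (c.fr v) * a)) u v,
    ← nucl3 (mzpow_nuc c.hhN (c.de u v)) (u*v) (mzpow c.h (epsZ (c.fr v) * a)),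
    mzpow_add c.hhN]

end DC
namespace DC
variable {m : ℕ} {G : Type*} [MufLoop G] (c : DC m G)

lemma dmul_one_left (x : G) : dmulM m c.fr c.ii c.h 1 x = x := by
  rw [c.dmul_eq]
  have hd : c.de 1 x = 0 := by
    unfold de; rw [c.ii_one, mul_zero, zero_add]
    have h1 := c.hiiM x; rw [Set.mem_Icc] at h1
    exact sgn_zero_of h1.1 h1.2
  rw [hd, mzpow_zero', MufLoop.mul_one, MufLoop.one_mul]

lemma dmul_one_right (x : G) : dmulM m c.fr c.ii c.h x 1 = x := by
  rw [c.dmul_eq]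
  have hd : c.de x 1 = 0 := by
    unfold de; rw [c.ii_one, c.fr_one, epsZ_zero, one_mul, add_zero]
    have h1 := c.hiiM x; rw [Set.mem_Icc] at h1
    exact sgn_zero_of h1.1 h1.2
  rw [hd, mzpow_zero', MufLoop.mul_one, MufLoop.mul_one]

lemma exu_right (a b : G) : ∃! x : G, dmulM m c.fr c.ii c.h a x = b := by
  obtain ⟨w, hw1, hw2⟩ := c.hsurj
    ⟨c.fi b - (if c.fr b - c.fr a = 0 then c.fi a else -(c.fi a)), c.fr b - c.fr a⟩
  have hdet : ∀ x : G, c.fr x = c.fr w → c.fi x = c.fi w → c.de a x = c.de a w := by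
    intro x h1 h2; unfold de; rw [h1, c.ii_congr h2]
  have hax : a * (a⁻¹ * (b * mzpow c.h (-(c.de a w)))) = b * mzpow c.h (-(c.de a w)) :=
    MufLoop.mul_inv_cancel_left _ _
  have hfrx : c.fr (a⁻¹ * (b * mzpow c.h (-(c.de a w)))) = c.fr w := by
    have h3 : c.fr a + c.fr (a⁻¹ * (b * mzpow c.h (-(c.de a w)))) = c.fr b := by
      rw [← c.hfr, hax, c.fr_mulH]
    rw [hw2]; linear_combination h3
  have hfix : c.fi (a⁻¹ * (b * mzpow c.h (-(c.de a w)))) = c.fi w := by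
    have h4 := c.hfi a (a⁻¹ * (b * mzpow c.h (-(c.de a w))))
    rw [hax, c.fi_mulH, hfrx, hw2] at h4
    rw [hw1]
    by_cases hcond : c.fr b - c.fr a = 0
    · rw [if_pos hcond] at h4 ⊢; linear_combination -h4
    · rw [if_neg hcond] at h4 ⊢; linear_combination -h4
  have hex : dmulM m c.fr c.ii c.h a (a⁻¹ * (b * mzpow c.h (-(c.de a w)))) = b := by
    rw [c.dmul_eq, hdet _ hfrx hfix, hax,
      ← nucl3 (mzpow_nuc c.hhN (c.de a w)) b (mzpow c.h (-(c.de a w))),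
      mzpow_add c.hhN, neg_add_cancel, mzpow_zero', MufLoop.mul_one]
  refine ⟨a⁻¹ * (b * mzpow c.h (-(c.de a w))), hex, ?_⟩
  intro x' hx'
  have h3 : c.fr x' = c.fr w := by
    have h1 := congrArg c.fr hx'
    rw [c.dmul_eq, c.fr_mulH, c.hfr] at h1
    rw [hw2]; linear_combination h1
  have h4 : c.fi x' = c.fi w := by
    have h1 := congrArg c.fi hx'
    rw [c.dmul_eq, c.fi_mulH, c.hfi, h3, hw2] at h1
    rw [hw1]
    by_cases hcond : c.fr b - c.fr a = 0
    · rw [if_pos hcond] at h1 ⊢; linear_combination h1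
    · rw [if_neg hcond] at h1 ⊢; linear_combination h1
  have h5 : dmulM m c.fr c.ii c.h a x' = dmulM m c.fr c.ii c.h a
      (a⁻¹ * (b * mzpow c.h (-(c.de a w)))) := by rw [hx', hex]
  rw [c.dmul_eq, c.dmul_eq, hdet _ h3 h4, hdet _ hfrx hfix] at h5
  exact mleft_cancel (mright_cancel h5)

lemma exu_left (a b : G) : ∃! y : G, dmulM m c.fr c.ii c.h y a = b := by
  obtain ⟨w, hw1, hw2⟩ := c.hsurj
    ⟨if c.fr a = 0 then c.fi b - c.fi a else -(c.fi b - c.fi a), c.fr b - c.fr a⟩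
  have hdet : ∀ y : G, c.fi y = c.fi w → c.de y a = c.de w a := by
    intro y h2; unfold de; rw [c.ii_congr h2]
  have hya : ((b * mzpow c.h (-(c.de w a))) * a⁻¹) * a = b * mzpow c.h (-(c.de w a)) :=
    MufLoop.inv_mul_cancel_right _ _
  have hfry : c.fr ((b * mzpow c.h (-(c.de w a))) * a⁻¹) = c.fr w := by
    have h3 : c.fr ((b * mzpow c.h (-(c.de w a))) * a⁻¹) + c.fr a = c.fr b := by
      rw [← c.hfr, hya, c.fr_mulH]
    rw [hw2]; linear_combination h3
  have hfiy : c.fi ((b * mzpow c.h (-(c.de w a))) * a⁻¹) = c.fi w := by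
    have h4 := c.hfi ((b * mzpow c.h (-(c.de w a))) * a⁻¹) a
    rw [hya, c.fi_mulH] at h4
    rw [hw1]
    by_cases hcond : c.fr a = 0
    · rw [if_pos hcond] at h4 ⊢; linear_combination -h4
    · rw [if_neg hcond] at h4 ⊢; linear_combination h4
  have hex : dmulM m c.fr c.ii c.h ((b * mzpow c.h (-(c.de w a))) * a⁻¹) a = b := by
    rw [c.dmul_eq, hdet _ hfiy, hya,
      ← nucl3 (mzpow_nuc c.hhN (c.de w a)) b (mzpow c.h (-(c.de w a))),
      mzpow_add c.hhN, neg_add_cancel, mzpow_zero', MufLoop.mul_one]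
  refine ⟨(b * mzpow c.h (-(c.de w a))) * a⁻¹, hex, ?_⟩
  intro y' hy'
  have h4 : c.fi y' = c.fi w := by
    have h1 := congrArg c.fi hy'
    rw [c.dmul_eq, c.fi_mulH, c.hfi] at h1
    rw [hw1]
    by_cases hcond : c.fr a = 0
    · rw [if_pos hcond] at h1 ⊢; linear_combination h1
    · rw [if_neg hcond] at h1 ⊢; linear_combination -h1
  have h5 : dmulM m c.fr c.ii c.h y' a = dmulM m c.fr c.ii c.h
      ((b * mzpow c.h (-(c.de w a))) * a⁻¹) a := by rw [hy', hex]
  rw [c.dmul_eq, c.dmul_eq, hdet _ h4, hdet _ hfiy] at h5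
  exact mright_cancel (mright_cancel h5)

lemma dmoufang (x y z : G) :
    dmulM m c.fr c.ii c.h (dmulM m c.fr c.ii c.h (dmulM m c.fr c.ii c.h x y) x) z
      = dmulM m c.fr c.ii c.h x (dmulM m c.fr c.ii c.h y (dmulM m c.fr c.ii c.h x z)) := by
  rw [c.dmul_eq x y, c.dmul_left_H (x*y) x (c.de x y),
    c.dmul_left_H ((x*y)*x) z (epsZ (c.fr x) * c.de x y + c.de (x*y) x),
    c.dmul_eq x z, c.dmul_right_H y (x*z) (c.de x z),
    c.dmul_right_H x (y*(x*z)) (c.de x z + c.de y (x*z))]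
  rw [MufLoop.moufang x y z]
  have t1 := c.ii_mul x y
  have t2 := c.ii_mul (x*y) x
  have t3 := c.ii_mul ((x*y)*x) z
  have s1 := c.ii_mul x z
  have s2 := c.ii_mul y (x*z)
  have s3 := c.ii_mul x (y*(x*z))
  rw [c.hfr x z, epsZ_add] at s2
  rw [c.hfr y (x*z), c.hfr x z, epsZ_add, epsZ_add] at s3
  have hq : c.ii (((x*y)*x)*z) = c.ii (x*(y*(x*z))) := by rw [MufLoop.moufang]
  have h2 : (2*(m:ℤ)) * (epsZ (c.fr z) * (epsZ (c.fr x) * c.de x y + c.de (x*y) x)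
        + c.de ((x*y)*x) z)
      = (2*(m:ℤ)) * ((c.de x z + c.de y (x*z)) + c.de x (y*(x*z))) := by
    linear_combination t3 + epsZ (c.fr z) * t2 + epsZ (c.fr z) * epsZ (c.fr x) * t1
      - s3 - s2 - s1 - hq
  have hE := mul_left_cancel₀ (two_m_ne c.hm) h2
  rw [hE]

lemma dassoc_iff (x y z : G) :
    x * (y * z) = (x * y) * z ↔
      dmulM m c.fr c.ii c.h x (dmulM m c.fr c.ii c.h y z)
        = dmulM m c.fr c.ii c.h (dmulM m c.fr c.ii c.h x y) z := by
  have expL : dmulM m c.fr c.ii c.h x (dmulM m c.fr c.ii c.h y z)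
      = (x*(y*z)) * mzpow c.h (c.de y z + c.de x (y*z)) := by
    rw [c.dmul_eq y z, c.dmul_right_H]
  have expR : dmulM m c.fr c.ii c.h (dmulM m c.fr c.ii c.h x y) z
      = ((x*y)*z) * mzpow c.h (epsZ (c.fr z) * c.de x y + c.de (x*y) z) := by
    rw [c.dmul_eq x y, c.dmul_left_H]
  have t1 := c.ii_mul y z
  have t2 := c.ii_mul x (y*z)
  rw [c.hfr y z, epsZ_add] at t2
  have s1 := c.ii_mul x y
  have s2 := c.ii_mul (x*y) z
  constructor
  · intro hb
    have hq : c.ii (x*(y*z)) = c.ii ((x*y)*z) := by rw [hb]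
    have h2 : (2*(m:ℤ)) * (c.de y z + c.de x (y*z))
        = (2*(m:ℤ)) * (epsZ (c.fr z) * c.de x y + c.de (x*y) z) := by
      linear_combination t2 + t1 - s2 - epsZ (c.fr z) * s1 - hq
    have hE := mul_left_cancel₀ (two_m_ne c.hm) h2
    rw [expL, expR, hb, hE]
  · intro hd
    rw [expL, expR] at hd
    have hq : c.ii (x*(y*z)) = c.ii ((x*y)*z) := by
      have h1 := congrArg c.ii hd; rwa [c.ii_mulH, c.ii_mulH] at h1
    have h2 : (2*(m:ℤ)) * (c.de y z + c.de x (y*z))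
        = (2*(m:ℤ)) * (epsZ (c.fr z) * c.de x y + c.de (x*y) z) := by
      linear_combination t2 + t1 - s2 - epsZ (c.fr z) * s1 - hq
    have hE := mul_left_cancel₀ (two_m_ne c.hm) h2
    rw [hE] at hd
    exact mright_cancel hd

lemma dassoc4_core (x y z w : G) (hfrw : c.fr w = 0)
    (hq : c.ii ((x*y)*z) = c.ii ((x*(y*z))*w)) :
    c.ii w = 0 ∧ epsZ (c.fr z) * c.de x y + c.de (x*y) z
      = (c.de y z + c.de x (y*z)) + c.de (x*(y*z)) w := by
  have t1 := c.ii_mul x y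
  have t2 := c.ii_mul (x*y) z
  have s1 := c.ii_mul y z
  have s2 := c.ii_mul x (y*z)
  rw [c.hfr y z, epsZ_add] at s2
  have s3 := c.ii_mul (x*(y*z)) w
  rw [hfrw, epsZ_zero, one_mul] at s3
  have hiw : c.ii w = 2*(m:ℤ) * (((c.de y z + c.de x (y*z)) + c.de (x*(y*z)) w)
      - (epsZ (c.fr z) * c.de x y + c.de (x*y) z)) := by
    linear_combination t2 + epsZ (c.fr z) * t1 - s3 - s2 - s1 - hq
  have hmem := c.hiiM w
  rw [Set.mem_Icc] at hmem
  have hsm := small_mult c.hm hmem.1 hmem.2 hiw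
  refine ⟨hsm.1, by linarith [hsm.2]⟩

lemma assoc4_iff (x y z w : G) :
    (x * y) * z = (x * (y * z)) * w ↔
      dmulM m c.fr c.ii c.h (dmulM m c.fr c.ii c.h x y) z
        = dmulM m c.fr c.ii c.h
            (dmulM m c.fr c.ii c.h x (dmulM m c.fr c.ii c.h y z)) w := by
  have expL : dmulM m c.fr c.ii c.h (dmulM m c.fr c.ii c.h x y) z
      = ((x*y)*z) * mzpow c.h (epsZ (c.fr z) * c.de x y + c.de (x*y) z) := by
    rw [c.dmul_eq x y, c.dmul_left_H]
  have expR : dmulM m c.fr c.ii c.h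
        (dmulM m c.fr c.ii c.h x (dmulM m c.fr c.ii c.h y z)) w
      = ((x*(y*z))*w) * mzpow c.h
          (epsZ (c.fr w) * (c.de y z + c.de x (y*z)) + c.de (x*(y*z)) w) := by
    rw [c.dmul_eq y z, c.dmul_right_H, c.dmul_left_H]
  constructor
  · intro hb
    have hfrw : c.fr w = 0 := by
      have h1 := congrArg c.fr hb
      simp only [c.hfr] at h1
      linear_combination -h1
    have hcore := c.dassoc4_core x y z w hfrw (by rw [hb])
    rw [expL, expR, hb, hfrw, epsZ_zero, one_mul, hcore.2]
  · intro hd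
    rw [expL, expR] at hd
    have hfrw : c.fr w = 0 := by
      have h1 := congrArg c.fr hd
      rw [c.fr_mulH, c.fr_mulH] at h1
      simp only [c.hfr] at h1
      linear_combination -h1
    have hq : c.ii ((x*y)*z) = c.ii ((x*(y*z))*w) := by
      have h1 := congrArg c.ii hd; rwa [c.ii_mulH, c.ii_mulH] at h1
    have hcore := c.dassoc4_core x y z w hfrw hq
    rw [hfrw, epsZ_zero, one_mul, ← hcore.2] at hd
    exact mright_cancel hd

end DC
section Gen
variable {G : Type*}

lemma subset_genSubloopM (mul : G → G → G) (one : G) (T : Set G) :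
    T ⊆ genSubloopM mul one T := fun x hx =>
  Set.mem_sInter.mpr (fun _ hA => hA.2 hx)

lemma genSubloopM_subset {mul : G → G → G} {one : G} {T A : Set G}
    (hA : IsSubloopM mul one A) (hT : T ⊆ A) : genSubloopM mul one T ⊆ A :=
  fun _ hx => Set.mem_sInter.mp hx A ⟨hA, hT⟩

lemma genSubloopM_isSubloop (mul : G → G → G) (one : G) (T : Set G)
    (hsolR : ∀ a b : G, ∃! x, mul a x = b) (hsolL : ∀ a b : G, ∃! y, mul y a = b) :
    IsSubloopM mul one (genSubloopM mul one T) := by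
  refine ⟨Set.mem_sInter.mpr (fun _ hA => hA.1.1), ?_, ?_, ?_⟩
  · intro a ha b hb
    exact Set.mem_sInter.mpr (fun A hA =>
      hA.1.2.1 a (Set.mem_sInter.mp ha A hA) b (Set.mem_sInter.mp hb A hA))
  · intro a ha b hb
    obtain ⟨x, hx, hux⟩ := hsolR a b
    refine ⟨x, Set.mem_sInter.mpr (fun A hA => ?_), hx⟩
    obtain ⟨x', hx'A, hx'⟩ := hA.1.2.2.1 a (Set.mem_sInter.mp ha A hA) b
      (Set.mem_sInter.mp hb A hA)
    rwa [← hux x' hx']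
  · intro a ha b hb
    obtain ⟨x, hx, hux⟩ := hsolL a b
    refine ⟨x, Set.mem_sInter.mpr (fun A hA => ?_), hx⟩
    obtain ⟨x', hx'A, hx'⟩ := hA.1.2.2.2 a (Set.mem_sInter.mp ha A hA) b
      (Set.mem_sInter.mp hb A hA)
    rwa [← hux x' hx']

lemma dot_solR [MufLoop G] (a b : G) : ∃! x, a * x = b :=
  ⟨a⁻¹ * b, MufLoop.mul_inv_cancel_left a b, fun x' hx' => by
    rw [← hx', MufLoop.inv_mul_cancel_left]⟩

lemma dot_solL [MufLoop G] (a b : G) : ∃! y, y * a = b :=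
  ⟨b * a⁻¹, MufLoop.inv_mul_cancel_right b a, fun y' hy' => by
    rw [← hy', MufLoop.mul_inv_cancel_right]⟩

end Gen

namespace DC
variable {m : ℕ} {G : Type*} [MufLoop G] (c : DC m G)

/-- The kernel subloop S = {w | fr w = 0 ∧ fi w = 0}. -/
def ker : Set G := {w : G | c.fr w = 0 ∧ c.fi w = 0}

lemma dmul_eq_mul_of_ker {a b : G} (ha : a ∈ c.ker) (hb : b ∈ c.ker) :
    dmulM m c.fr c.ii c.h a b = a * b := by
  rw [c.dmul_eq]
  have hd : c.de a b = 0 := by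
    unfold de
    rw [c.ii_zero ha.2, c.ii_zero hb.2, mul_zero, zero_add]
    have h1 : (1:ℤ) ≤ (m:ℤ) := by exact_mod_cast c.hm
    exact sgn_zero_of (by omega) (by omega)
  rw [hd, mzpow_zero', MufLoop.mul_one]

lemma ker_dot_subloop : IsSubloopM (· * · : G → G → G) 1 c.ker := by
  refine ⟨⟨c.fr_one, c.fi_one⟩, ?_, ?_, ?_⟩
  · intro a ha b hb
    refine ⟨?_, ?_⟩
    · show c.fr (a*b) = 0; rw [c.hfr, ha.1, hb.1, add_zero]
    · show c.fi (a*b) = 0; rw [c.hfi, if_pos hb.1, ha.2, hb.2, add_zero]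
  · intro a ha b hb
    have hfr : c.fr (a⁻¹ * b) = 0 := by
      have h1 := c.hfr a (a⁻¹ * b)
      rw [MufLoop.mul_inv_cancel_left, ha.1, zero_add] at h1
      rw [← h1, hb.1]
    have hfi : c.fi (a⁻¹ * b) = 0 := by
      have h1 := c.hfi a (a⁻¹ * b)
      rw [MufLoop.mul_inv_cancel_left, if_pos hfr, ha.2, zero_add] at h1
      rw [← h1, hb.2]
    exact ⟨a⁻¹ * b, ⟨hfr, hfi⟩, MufLoop.mul_inv_cancel_left a b⟩
  · intro a ha b hb
    have hfr : c.fr (b * a⁻¹) = 0 := by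
      have h1 := c.hfr (b * a⁻¹) a
      rw [MufLoop.inv_mul_cancel_right, ha.1, add_zero] at h1
      rw [← h1, hb.1]
    have hfi : c.fi (b * a⁻¹) = 0 := by
      have h1 := c.hfi (b * a⁻¹) a
      rw [MufLoop.inv_mul_cancel_right, if_pos ha.1, ha.2, add_zero] at h1
      rw [← h1, hb.2]
    exact ⟨b * a⁻¹, ⟨hfr, hfi⟩, MufLoop.inv_mul_cancel_right b a⟩

lemma ker_dmul_subloop : IsSubloopM (dmulM m c.fr c.ii c.h) 1 c.ker := by
  obtain ⟨h1, h2, h3, h4⟩ := c.ker_dot_subloop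
  refine ⟨h1, ?_, ?_, ?_⟩
  · intro a ha b hb
    rw [c.dmul_eq_mul_of_ker ha hb]; exact h2 a ha b hb
  · intro a ha b hb
    obtain ⟨x, hxm, hx⟩ := h3 a ha b hb
    exact ⟨x, hxm, by rw [c.dmul_eq_mul_of_ker ha hxm]; exact hx⟩
  · intro a ha b hb
    obtain ⟨x, hxm, hx⟩ := h4 a ha b hb
    exact ⟨x, hxm, by rw [c.dmul_eq_mul_of_ker hxm ha]; exact hx⟩

lemma assocset_subset_ker :
    {w : G | ∃ x y z : G, (x * y) * z = (x * (y * z)) * w} ⊆ c.ker := by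
  rintro w ⟨x, y, z, hb⟩
  have hfrw : c.fr w = 0 := by
    have h1 := congrArg c.fr hb
    simp only [c.hfr] at h1
    linear_combination -h1
  have hcore := c.dassoc4_core x y z w hfrw (by rw [hb])
  exact ⟨hfrw, c.fi_of_ii_zero hcore.1⟩

lemma gen_dot_subset_ker :
    genSubloopM (· * · : G → G → G) 1
      {w : G | ∃ x y z : G, (x * y) * z = (x * (y * z)) * w} ⊆ c.ker :=
  genSubloopM_subset c.ker_dot_subloop c.assocset_subset_ker

lemma gen_dmul_subset_ker :
    genSubloopM (dmulM m c.fr c.ii c.h) 1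
      {w : G | ∃ x y z : G, (x * y) * z = (x * (y * z)) * w} ⊆ c.ker :=
  genSubloopM_subset c.ker_dmul_subloop c.assocset_subset_ker

lemma gen_eq_same_T :
    genSubloopM (· * · : G → G → G) 1
      {w : G | ∃ x y z : G, (x * y) * z = (x * (y * z)) * w}
    = genSubloopM (dmulM m c.fr c.ii c.h) 1
      {w : G | ∃ x y z : G, (x * y) * z = (x * (y * z)) * w} := by
  set T := {w : G | ∃ x y z : G, (x * y) * z = (x * (y * z)) * w} with hT
  have hdot := genSubloopM_isSubloop (· * · : G → G → G) (1:G) T dot_solR dot_solL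
  have hdmul := genSubloopM_isSubloop (dmulM m c.fr c.ii c.h) (1:G) T
    (fun a b => c.exu_right a b) (fun a b => c.exu_left a b)
  have hdotker := c.gen_dot_subset_ker
  have hdmulker := c.gen_dmul_subset_ker
  apply subset_antisymm
  · -- gen(·) ⊆ gen(*): gen(*) is a dot-subloop containing T
    apply genSubloopM_subset (A := genSubloopM (dmulM m c.fr c.ii c.h) 1 T) ?_
      (subset_genSubloopM _ _ T)
    obtain ⟨h1, h2, h3, h4⟩ := hdmul
    refine ⟨h1, ?_, ?_, ?_⟩
    · intro a ha b hb
      show a * b ∈ _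
      rw [← c.dmul_eq_mul_of_ker (hdmulker ha) (hdmulker hb)]
      exact h2 a ha b hb
    · intro a ha b hb
      obtain ⟨x, hxm, hx⟩ := h3 a ha b hb
      exact ⟨x, hxm, by show a * x = b
                        rw [← c.dmul_eq_mul_of_ker (hdmulker ha) (hdmulker hxm)]; exact hx⟩
    · intro a ha b hb
      obtain ⟨x, hxm, hx⟩ := h4 a ha b hb
      exact ⟨x, hxm, by show x * a = b
                        rw [← c.dmul_eq_mul_of_ker (hdmulker hxm) (hdmulker ha)]; exact hx⟩
  · -- gen(*) ⊆ gen(·): gen(·) is a *-subloop containing T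
    apply genSubloopM_subset (A := genSubloopM (· * · : G → G → G) 1 T) ?_
      (subset_genSubloopM _ _ T)
    obtain ⟨h1, h2, h3, h4⟩ := hdot
    refine ⟨h1, ?_, ?_, ?_⟩
    · intro a ha b hb
      rw [c.dmul_eq_mul_of_ker (hdotker ha) (hdotker hb)]
      exact h2 a ha b hb
    · intro a ha b hb
      obtain ⟨x, hxm, hx⟩ := h3 a ha b hb
      exact ⟨x, hxm, by rw [c.dmul_eq_mul_of_ker (hdotker ha) (hdotker hxm)]; exact hx⟩
    · intro a ha b hb
      obtain ⟨x, hxm, hx⟩ := h4 a ha b hb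
      exact ⟨x, hxm, by rw [c.dmul_eq_mul_of_ker (hdotker hxm) (hdotker ha)]; exact hx⟩

lemma assocset_eq :
    {w : G | ∃ x y z : G, dmulM m c.fr c.ii c.h (dmulM m c.fr c.ii c.h x y) z
        = dmulM m c.fr c.ii c.h
            (dmulM m c.fr c.ii c.h x (dmulM m c.fr c.ii c.h y z)) w}
    = {w : G | ∃ x y z : G, (x * y) * z = (x * (y * z)) * w} := by
  ext w
  exact exists_congr fun x => exists_congr fun y => exists_congr fun z =>
    (c.assoc4_iff x y z w).symm

lemma gen_eq :
    genSubloopM (· * · : G → G → G) 1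
      {w : G | ∃ x y z : G, (x * y) * z = (x * (y * z)) * w}
    = genSubloopM (dmulM m c.fr c.ii c.h) 1
      {w : G | ∃ x y z : G, dmulM m c.fr c.ii c.h (dmulM m c.fr c.ii c.h x y) z
          = dmulM m c.fr c.ii c.h
              (dmulM m c.fr c.ii c.h x (dmulM m c.fr c.ii c.h y z)) w} := by
  rw [c.assocset_eq]
  exact c.gen_eq_same_T

lemma nuc_eq :
    nucSetM (· * · : G → G → G) = nucSetM (dmulM m c.fr c.ii c.h) := by
  ext x
  simp only [nucSetM, Set.mem_setOf_eq]
  constructor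
  · intro hx y z
    exact ⟨(c.dassoc_iff x y z).mp (hx y z).1,
      (c.dassoc_iff y x z).mp (hx y z).2.1,
      (c.dassoc_iff y z x).mp (hx y z).2.2⟩
  · intro hx y z
    exact ⟨(c.dassoc_iff x y z).mpr (hx y z).1,
      (c.dassoc_iff y x z).mpr (hx y z).2.1,
      (c.dassoc_iff y z x).mpr (hx y z).2.2⟩

end DC

/-- Dihedral construction for Moufang loops (Theorem "Dihedral"): under condition
(D) — S ⊴ G with G/S dihedral of order 4m generated by involutions β,γ with
α = βγ of order 2m (encoded by the index maps fi, fr giving the coset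
β^{fr x} α^{fi x} of x, their multiplication rules, and surjectivity),
1 ≠ h ∈ S ∩ Z(G₀) ∩ N(G) with hxh = x for x ∈ G₁ — the groupoid (G,*) is a
Moufang loop, the associators of (G,·) and (G,*) coincide, the associator
subloops coincide as loops, and the nuclei coincide as sets. -/
theorem stmt12 (m : ℕ) (hm : 0 < m) (G : Type*) [MufLoop G]
    (fi : G → ZMod (2 * m)) (fr : G → ZMod 2)
    (hfr : ∀ x y : G, fr (x * y) = fr x + fr y)
    (hfi : ∀ x y : G, fi (x * y) = (if fr y = 0 then fi x else -fi x) + fi y)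
    (hsurj : ∀ p : ZMod (2 * m) × ZMod 2, ∃ x : G, fi x = p.1 ∧ fr x = p.2)
    (S : Set G) (hSnormal : IsNormalSubloopM (· * · : G → G → G) 1 S)
    (hSker : ∀ x : G, x ∈ S ↔ (fi x = 0 ∧ fr x = 0))
    (ii : G → ℤ)
    (hiiM : ∀ x : G, ii x ∈ Set.Icc (1 - (m : ℤ)) (m : ℤ))
    (hii : ∀ x : G, ((ii x : ZMod (2 * m))) = fi x)
    (h : G) (hh1 : h ≠ 1) (hhS : h ∈ S)
    (hhN : h ∈ nucSetM (· * · : G → G → G))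
    (hhZ0 : ∀ y : G, fr y = 0 → h * y = y * h)
    (hhG1 : ∀ x : G, fr x ≠ 0 → (h * x) * h = x) :
    -- (G,*) is a Moufang loop:
    (∀ x : G, dmulM m fr ii h 1 x = x ∧ dmulM m fr ii h x 1 = x) ∧
    (∀ a b : G, (∃! x : G, dmulM m fr ii h a x = b) ∧
      (∃! y : G, dmulM m fr ii h y a = b)) ∧
    (∀ x y z : G, dmulM m fr ii h (dmulM m fr ii h (dmulM m fr ii h x y) x) z
        = dmulM m fr ii h x (dmulM m fr ii h y (dmulM m fr ii h x z))) ∧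
    -- the associators coincide:
    (∀ x y z w : G, (x * y) * z = (x * (y * z)) * w ↔
        dmulM m fr ii h (dmulM m fr ii h x y) z
          = dmulM m fr ii h (dmulM m fr ii h x (dmulM m fr ii h y z)) w) ∧
    -- the associator subloops coincide, as loops:
    (genSubloopM (· * · : G → G → G) 1
        {w : G | ∃ x y z : G, (x * y) * z = (x * (y * z)) * w}
      = genSubloopM (dmulM m fr ii h) 1
        {w : G | ∃ x y z : G, dmulM m fr ii h (dmulM m fr ii h x y) z
            = dmulM m fr ii h (dmulM m fr ii h x (dmulM m fr ii h y z)) w}) ∧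
    (∀ a ∈ genSubloopM (· * · : G → G → G) 1
        {w : G | ∃ x y z : G, (x * y) * z = (x * (y * z)) * w},
      ∀ b ∈ genSubloopM (· * · : G → G → G) 1
        {w : G | ∃ x y z : G, (x * y) * z = (x * (y * z)) * w},
      a * b = dmulM m fr ii h a b) ∧
    -- the nuclei coincide as sets:
    nucSetM (· * · : G → G → G) = nucSetM (dmulM m fr ii h) := by
  obtain ⟨hfih', hfrh'⟩ := (hSker h).mp hhS
  let c : DC m G := ⟨fi, fr, ii, h, hm, hfr, hfi, hsurj, hiiM, hii, hfrh', hfih',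
    hhN, hhZ0, hhG1⟩
  refine ⟨?_, ?_, ?_, ?_, ?_, ?_, ?_⟩
  · exact fun x => ⟨c.dmul_one_left x, c.dmul_one_right x⟩
  · exact fun a b => ⟨c.exu_right a b, c.exu_left a b⟩
  · exact fun x y z => c.dmoufang x y z
  · exact fun x y z w => c.assoc4_iff x y z w
  · exact c.gen_eq
  · exact fun a ha b hb =>
      (c.dmul_eq_mul_of_ker (c.gen_dot_subset_ker ha) (c.gen_dot_subset_ker hb)).symm
  · exact c.nuc_eq
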